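/- (Lemma on conjugation of MΔ⁻¹N by T_I(r), identity (tiMN).) Let r : ℤ → k be nowhere vanishing, M, N : ℤ → k functions, and let G : ℤ → k be any function with Δ(G) = r·M (pointwise). Set M̃ := Λ⁻¹(r⁻¹)·G, Ñ := Λ⁻¹(r)·Δ*(N·r⁻¹), and h := −Λ⁻¹(r)·Δ*(N·Λ(G)·r⁻¹), all defined pointwise. Then as linear operators on V: T_I(r) ∘ M_M ∘ Δ⁻¹ ∘ M_N ∘ T_I(r)⁻¹ = M_{Λ⁻¹(r⁻¹)} ∘ Δ⁻¹ ∘ M_h + M_{M̃} ∘ Δ⁻¹ ∘ M_{Ñ}. (Here M̃ realizes T_I(r)(M), Ñ realizes T_I(r)^{*−1}(N), and h realizes T_I(r)^{*−1}((MΔ⁻¹N)*(r)) of the formal pseudo-difference calculus; the identity holds for every choice of the antiderivative G.) -/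

import Mathlib

open Finset

namespace CdKP

variable {k : Type*} [Field k]

/-- Shift operator: `(Λ f) n = f (n+1)`. -/
def Lam (f : ℤ → k) : ℤ → k := fun n => f (n + 1)

/-- Inverse shift operator: `(Λ⁻¹ f) n = f (n-1)`. -/
def LamInv (f : ℤ → k) : ℤ → k := fun n => f (n - 1)

/-- Difference operator `Δ = Λ - 1`. -/
def Dlt (f : ℤ → k) : ℤ → k := fun n => f (n + 1) - f n

/-- Formal adjoint difference operator `Δ* = Λ⁻¹ - 1`. -/
def DltStar (f : ℤ → k) : ℤ → k := fun n => f (n - 1) - f n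

/-- Inverse of `Δ` on `V`: `(Δ⁻¹ f) n = -∑_{m ≥ n} f m`. -/
noncomputable def Dinv (f : ℤ → k) : ℤ → k := fun n => -∑ᶠ m ∈ Set.Ici n, f m

/-- Membership in `V`: `f n = 0` for all sufficiently large `n`. -/
def InV (f : ℤ → k) : Prop := ∃ N : ℤ, ∀ n ≥ N, f n = 0

/-- Multiplication operator `M_g`: `(M_g f) n = g n * f n`. -/
def Mul (g f : ℤ → k) : ℤ → k := fun n => g n * f n

/-- Pointwise inverse of a function. -/
def pinv (r : ℤ → k) : ℤ → k := fun n => (r n)⁻¹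

/-- Integral-type gauge transformation operator `T_I(r) = M_{Λ⁻¹(r⁻¹)} ∘ Δ⁻¹ ∘ M_r`. -/
noncomputable def TI (r f : ℤ → k) : ℤ → k := Mul (LamInv (pinv r)) (Dinv (Mul r f))

/-- The inverse of `T_I(r)`: `M_{r⁻¹} ∘ Δ ∘ M_{Λ⁻¹(r)}`. -/
def TIinv (r f : ℤ → k) : ℤ → k := Mul (pinv r) (Dlt (Mul (LamInv r) f))

lemma inV_mul (g f : ℤ → k) (hf : InV f) : InV (Mul g f) := by
  obtain ⟨N, hN⟩ := hf
  exact ⟨N, fun n hn => by simp [Mul, hN n hn]⟩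

lemma inV_add (u v : ℤ → k) (hu : InV u) (hv : InV v) : InV (fun n => u n + v n) := by
  obtain ⟨N, hN⟩ := hu; obtain ⟨P, hP⟩ := hv
  refine ⟨max N P, fun n hn => ?_⟩
  show u n + v n = 0
  rw [hN n (le_trans (le_max_left _ _) hn), hP n (le_trans (le_max_right _ _) hn), add_zero]

lemma inV_sub (u v : ℤ → k) (hu : InV u) (hv : InV v) : InV (fun n => u n - v n) := by
  obtain ⟨N, hN⟩ := hu; obtain ⟨P, hP⟩ := hv
  refine ⟨max N P, fun n hn => ?_⟩
  show u n - v n = 0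
  rw [hN n (le_trans (le_max_left _ _) hn), hP n (le_trans (le_max_right _ _) hn), sub_zero]

lemma inV_dlt (f : ℤ → k) (hf : InV f) : InV (Dlt f) := by
  obtain ⟨N, hN⟩ := hf
  exact ⟨N, fun n hn => by simp [Dlt, hN n hn, hN (n+1) (by omega)]⟩

lemma inV_shift (f : ℤ → k) (hf : InV f) : InV (fun n => f (n + 1)) := by
  obtain ⟨N, hN⟩ := hf
  exact ⟨N, fun n hn => hN (n+1) (by omega)⟩

lemma inV_dinv (f : ℤ → k) (hf : InV f) : InV (Dinv f) := by
  obtain ⟨N, hN⟩ := hf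
  refine ⟨N, fun n hn => ?_⟩
  simp only [Dinv, neg_eq_zero]
  exact finsum_mem_of_eqOn_zero (fun m hm => hN m (le_trans hn hm))

lemma dinv_succ (f : ℤ → k) (hf : InV f) (n : ℤ) :
    Dinv f n = -(f n) + Dinv f (n + 1) := by
  obtain ⟨N, hN⟩ := hf
  have hfin : (Set.Ici (n+1) ∩ Function.support f).Finite := by
    apply Set.Finite.subset (Set.finite_Icc (n+1) N)
    rintro m ⟨h1, h2⟩
    refine ⟨h1, ?_⟩
    by_contra h
    exact h2 (hN m (by omega))
  have hins : Set.Ici n = insert n (Set.Ici (n+1)) := by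
    ext m; simp only [Set.mem_Ici, Set.mem_insert_iff]; omega
  have hnotmem : n ∉ Set.Ici (n+1) := by simp
  simp only [Dinv, hins, finsum_mem_insert' f hnotmem hfin]
  ring

lemma dlt_dinv (f : ℤ → k) (hf : InV f) (n : ℤ) : Dlt (Dinv f) n = f n := by
  have h := dinv_succ f hf n
  simp only [Dlt]
  rw [h]; ring

lemma dlt_inj (u v : ℤ → k) (hu : InV u) (hv : InV v)
    (h : ∀ n, Dlt u n = Dlt v n) : u = v := by
  obtain ⟨N, hN⟩ := hu; obtain ⟨P, hP⟩ := hv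
  funext n
  have key : ∀ j : ℕ, u n - v n = u (n + j) - v (n + j) := by
    intro j
    induction j with
    | zero => simp
    | succ j ih =>
      have hd := h (n + j)
      simp only [Dlt] at hd
      have : (n : ℤ) + (j + 1 : ℕ) = (n + j) + 1 := by push_cast; ring
      rw [this]
      linear_combination ih - hd
  have hj := key (max N P - n).toNat
  have hge : n + ((max N P - n).toNat : ℤ) ≥ max N P := by
    rcases le_or_gt n (max N P) with hc | hc
    · rw [Int.toNat_of_nonneg (by omega)]; omega
    · have : (max N P - n).toNat = 0 := by omega
      rw [this]; push_cast; omega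
  rw [hN _ (le_trans (le_max_left _ _) hge), hP _ (le_trans (le_max_right _ _) hge)] at hj
  have : u n - v n = 0 := by rw [hj]; ring
  linear_combination this


/-- Identity (tiMN): on `V`, for any antiderivative `G` of `r·M`,
`T_I(r) ∘ M_M ∘ Δ⁻¹ ∘ M_N ∘ T_I(r)⁻¹ = M_{Λ⁻¹(r⁻¹)} ∘ Δ⁻¹ ∘ M_h + M_M̃ ∘ Δ⁻¹ ∘ M_Ñ`
with `M̃ = Λ⁻¹(r⁻¹)·G`, `Ñ = Λ⁻¹(r)·Δ*(N·r⁻¹)`, `h = -Λ⁻¹(r)·Δ*(N·Λ(G)·r⁻¹)`. -/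
theorem TI_conj_MdinvN {k : Type*} [Field k] (r : ℤ → k) (hr : ∀ n, r n ≠ 0)
    (M N G : ℤ → k) (hG : ∀ n : ℤ, Dlt G n = r n * M n)
    (f : ℤ → k) (hf : InV f) :
    TI r (Mul M (Dinv (Mul N (TIinv r f)))) =
      Mul (LamInv (pinv r))
          (Dinv (Mul (fun n => -(LamInv r n * DltStar (fun m => N m * Lam G m * (r m)⁻¹) n)) f))
        +
      Mul (fun n => LamInv (pinv r) n * G n)
          (Dinv (Mul (fun n => LamInv r n * DltStar (fun m => N m * (r m)⁻¹) n) f)) := by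
  set Nt : ℤ → k := fun n => LamInv r n * DltStar (fun m => N m * (r m)⁻¹) n with hNt
  set h0 : ℤ → k := fun n => -(LamInv r n * DltStar (fun m => N m * Lam G m * (r m)⁻¹) n) with hh0
  set g : ℤ → k := TIinv r f with hgdef
  have hgV : InV g := inV_mul _ _ (inV_dlt _ (inV_mul _ _ hf))
  set A : ℤ → k := Dinv (Mul N g) with hA
  set Z : ℤ → k := Dinv (Mul Nt f) with hZ
  set Y : ℤ → k := Dinv (Mul h0 f) with hY
  set C : ℤ → k := fun n => N n * r (n - 1) * (r n)⁻¹ * f n with hC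
  have hNgV : InV (Mul N g) := inV_mul _ _ hgV
  have hNtfV : InV (Mul Nt f) := inV_mul _ _ hf
  have hh0fV : InV (Mul h0 f) := inV_mul _ _ hf
  have hAV : InV A := inV_dinv _ hNgV
  have hZV : InV Z := inV_dinv _ hNtfV
  have hYV : InV Y := inV_dinv _ hh0fV
  have hZsV : InV (fun n => Z (n + 1)) := inV_shift _ hZV
  have hCV : InV C := by
    obtain ⟨P, hP⟩ := hf
    exact ⟨P, fun n hn => by simp only [hC, hP n hn, mul_zero]⟩
  -- Step 1: A n - Z (n+1) = C n
  have step1 : (fun n => A n - Z (n + 1)) = C := by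
    apply dlt_inj _ _ (inV_sub _ _ hAV hZsV) hCV
    intro n
    have h1 := dlt_dinv (Mul N g) hNgV n
    have h2 := dlt_dinv (Mul Nt f) hNtfV (n + 1)
    rw [← hA] at h1
    rw [← hZ] at h2
    simp only [Dlt] at h1 h2 ⊢
    have hcalc : A (n+1) - Z (n+1+1) - (A n - Z (n+1)) = Mul N g n - Mul Nt f (n+1) := by
      linear_combination h1 - h2
    rw [hcalc]
    simp only [Mul, hgdef, TIinv, pinv, LamInv, Dlt, hNt, DltStar, hC, add_sub_cancel_right]
    have hrn := hr n
    field_simp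
    ring
  -- Key scalar identity
  have key : ∀ n : ℤ, r n * M n * C n = h0 n * f n + G n * (Nt n * f n) := by
    intro n
    have e5 : G (n + 1) = G n + r n * M n := by
      have := hG n; simp only [Dlt] at this; linear_combination this
    simp only [hC, hh0, hNt, LamInv, DltStar, Lam, sub_add_cancel, e5]
    field_simp
    ring
  -- Step 2
  set X : ℤ → k := Dinv (Mul r (Mul M A)) with hX
  have hXV : InV X := inV_dinv _ (inV_mul _ _ (inV_mul _ _ hAV))
  have step2 : X = fun n => Y n + G n * Z n := by
    apply dlt_inj _ _ hXV (inV_add _ _ hYV (inV_mul G Z hZV))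
    intro n
    have e1 := dlt_dinv (Mul r (Mul M A)) (inV_mul _ _ (inV_mul _ _ hAV)) n
    have e2 := dlt_dinv (Mul h0 f) hh0fV n
    have e3 := dlt_dinv (Mul Nt f) hNtfV n
    rw [← hX] at e1
    rw [← hY] at e2
    rw [← hZ] at e3
    have e4 := congrFun step1 n
    have e5 : G (n + 1) - G n = r n * M n := by
      have := hG n; simp only [Dlt] at this; linear_combination this
    have e6 := key n
    simp only [Dlt, Mul] at e1 e2 e3 ⊢
    linear_combination e1 - e2 - G n * e3 + (r n * M n) * e4 - Z (n+1) * e5 + e6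
  -- Conclusion
  funext n
  have hx := congrFun step2 n
  simp only [TI, Mul, Pi.add_apply]
  rw [← hX, hx]
  ring

end CdKP
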